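/- arXiv:2510.18529 — 3 statements merged into one kernel-verified Lean document; each statement's English description precedes it below -/
import Mathlib

section
/- Let q and p be primes with 3 ≤ q < p and q − 1 dividing p − 1. Let f : ℤ_p → ℤ_q be a map with f(0) = 0 whose restriction to nonzero elements satisfies: f(x) ≠ 0 for all x ≠ 0, f(x·y) = f(x)·f(y) for all nonzero x, y ∈ ℤ_p, and every nonzero element of ℤ_q is of the form f(x) for some nonzero x ∈ ℤ_p (i.e., f is induced by a surjective group homomorphism (ℤ/pℤ)^× → (ℤ/qℤ)^×). Let A be the circulant matrix with rows and columns indexed by ℤ_p and entries in the field ℤ_q = 𝔽_q determined by A_{i+j, i} = f(j) for all i, j ∈ ℤ_p. Then the rank of A equals p − 1. -/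
open Matrix AddChar Module

theorem rank_circulant (p q : ℕ) [Fact p.Prime] [Fact q.Prime]
    (hq3 : 3 ≤ q) (hqp : q < p) (hdvd : (q - 1) ∣ (p - 1))
    (f : ZMod p → ZMod q) (hf0 : f 0 = 0)
    (hfne : ∀ x : ZMod p, x ≠ 0 → f x ≠ 0)
    (hfmul : ∀ x y : ZMod p, x ≠ 0 → y ≠ 0 → f (x * y) = f x * f y)
    (hfsurj : ∀ z : ZMod q, z ≠ 0 → ∃ x : ZMod p, x ≠ 0 ∧ f x = z)
    (A : Matrix (ZMod p) (ZMod p) (ZMod q))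
    (hA : ∀ i j : ZMod p, A (i + j) i = f j) :
    A.rank = p - 1 := by
  have hp : p.Prime := Fact.out
  have hq : q.Prime := Fact.out
  haveI : NeZero p := ⟨hp.pos.ne'⟩
  have hqnp : ¬ q ∣ p := by
    intro h
    have h2 := hq.two_le
    rcases (Nat.Prime.eq_one_or_self_of_dvd hp q h) with h1 | h1 <;> omega
  haveI hnz : NeZero ((p : ℕ) : ZMod q) := ⟨by
    simpa [ZMod.natCast_eq_zero_iff] using hqnp⟩
  set n : ℕ+ := ⟨p, hp.pos⟩ with hn
  haveI : NeZero (((n : ℕ) : ZMod q)) := hnz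
  set F := CyclotomicField n (ZMod q) with hF
  have hμ : IsPrimitiveRoot (IsCyclotomicExtension.zeta n (ZMod q) F) p :=
    IsCyclotomicExtension.zeta_spec n (ZMod q) F
  set ψ : AddChar (ZMod p) F := AddChar.zmodChar p hμ.pow_eq_one with hψ
  have hψprim : ψ.IsPrimitive := AddChar.zmodChar_primitive_of_primitive_root p hμ
  set ι : ZMod q →+* F := algebraMap (ZMod q) F with hι
  have hιinj : Function.Injective ι := ι.injective
  -- p ≠ 0 in F
  have hpF : ((p : ℕ) : F) ≠ 0 := by
    have : ((p : ℕ) : F) = ι ((p : ℕ) : ZMod q) := by push_cast; simp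
    rw [this]
    simpa using fun h => hnz.out (hιinj (by simpa using h))
  -- f 1 = 1
  have hf1 : f 1 = 1 := by
    have h := hfmul 1 1 one_ne_zero one_ne_zero
    rw [mul_one] at h
    have := hfne 1 one_ne_zero
    field_simp at h
    tauto
  -- the multiplicative character
  set χ : MulChar (ZMod p) F :=
    { toFun := fun x => ι (f x)
      map_one' := by simp [hf1]
      map_mul' := by
        intro x y
        by_cases hx : x = 0
        · simp [hx, hf0]
        by_cases hy : y = 0
        · simp [hy, hf0]
        · simp [hfmul x y hx hy]
      map_nonunit' := by
        intro a ha
        have : a = 0 := by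
          by_contra h
          exact ha (isUnit_iff_ne_zero.mpr h)
        simp [this, hf0] } with hχdef
  have hχapp : ∀ x, χ x = ι (f x) := fun x => rfl
  have hχ1 : χ ≠ 1 := by
    rw [MulChar.ne_one_iff]
    have hm1 : (-1 : ZMod q) ≠ 0 := by
      simp only [ne_eq, neg_eq_zero]
      exact one_ne_zero
    obtain ⟨x, hx0, hfx⟩ := hfsurj (-1) hm1
    refine ⟨(isUnit_iff_ne_zero.mpr hx0).unit, ?_⟩
    rw [IsUnit.unit_spec, hχapp, hfx]
    intro h
    have : (-1 : ZMod q) = 1 := hιinj (by simpa using h)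
    have h2 : (2 : ZMod q) = 0 := by linear_combination -this
    have : ((2 : ℕ) : ZMod q) = 0 := by push_cast; exact h2
    rw [ZMod.natCast_eq_zero_iff] at this
    have := Nat.le_of_dvd (by norm_num) this
    omega
  -- Gauss sums
  have hG : ∀ j : ZMod p, j ≠ 0 → gaussSum χ (ψ.mulShift j) ≠ 0 := by
    intro j hj
    have hprim : (ψ.mulShift j).IsPrimitive := by
      intro a ha
      rw [AddChar.mulShift_mulShift]
      exact hψprim (mul_ne_zero hj ha)
    have hcard : ((Fintype.card (ZMod p) : ℕ) : F) ≠ 0 := by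
      rwa [ZMod.card p]
    exact gaussSum_ne_zero_of_nontrivial hcard hχ1 hprim
  
  classical
  have hAk : ∀ k i : ZMod p, A k i = f (k - i) := by
    intro k i
    have := hA i (k - i)
    rwa [show i + (k - i) = k by ring] at this
  -- orthogonality
  have horth : ∀ m : ZMod p, ∑ j, ψ (m * j) = if m = 0 then ((p : ℕ) : F) else 0 := by
    intro m
    have h1 : ∑ j, ψ (m * j) = ∑ j, (ψ.mulShift m) j := by
      simp [AddChar.mulShift_apply]
    rw [h1, AddChar.sum_eq_ite]
    by_cases hm : m = 0
    · rw [if_pos hm, if_pos (by rw [hm, AddChar.mulShift_zero, AddChar.one_eq_zero]),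
        ZMod.card]
    · rw [if_neg hm, if_neg]
      intro h
      exact hψprim hm (by rw [h, AddChar.one_eq_zero])
  -- key kernel fact over F
  have key : ∀ y : ZMod p → F, (∀ k, ∑ i, χ (k - i) * y i = 0) →
      ∀ i0 : ZMod p, ((p : ℕ) : F) * y i0 = ∑ i, y i := by
    intro y hrow i0
    set Y : ZMod p → F := fun j => ∑ i, y i * ψ (i * j) with hYdef
    have hzero : ∀ j : ZMod p, j ≠ 0 → Y j = 0 := by
      intro j hj
      have hsumT : ∑ k, ψ (k * j) * ∑ i, χ (k - i) * y i = 0 := by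
        simp [hrow]
      have hinner : ∀ i : ZMod p, ∑ k, ψ (k * j) * χ (k - i)
          = ψ (i * j) * gaussSum χ (ψ.mulShift j) := by
        intro i
        rw [gaussSum, Finset.mul_sum]
        apply Fintype.sum_equiv (Equiv.subRight i)
        intro t
        have e1 : (Equiv.subRight i) t = t - i := rfl
        rw [e1, AddChar.mulShift_apply,
          show t * j = i * j + j * (t - i) by ring, AddChar.map_add_eq_mul]
        ring
      have hswap : ∑ k, ψ (k * j) * ∑ i, χ (k - i) * y i
          = Y j * gaussSum χ (ψ.mulShift j) := by
        calc ∑ k, ψ (k * j) * ∑ i, χ (k - i) * y i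
            = ∑ k, ∑ i, ψ (k * j) * χ (k - i) * y i := by
              apply Finset.sum_congr rfl; intro k _
              rw [Finset.mul_sum]; apply Finset.sum_congr rfl; intro i _; ring
          _ = ∑ i, ∑ k, ψ (k * j) * χ (k - i) * y i := Finset.sum_comm
          _ = ∑ i, (∑ k, ψ (k * j) * χ (k - i)) * y i := by
              apply Finset.sum_congr rfl; intro i _; rw [Finset.sum_mul]
          _ = ∑ i, (ψ (i * j) * gaussSum χ (ψ.mulShift j)) * y i := by
              apply Finset.sum_congr rfl; intro i _; rw [hinner]
          _ = (∑ i, y i * ψ (i * j)) * gaussSum χ (ψ.mulShift j) := by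
              rw [Finset.sum_mul]; apply Finset.sum_congr rfl; intro i _; ring
      rw [hswap] at hsumT
      exact (mul_eq_zero.mp hsumT).resolve_right (hG j hj)
    -- Fourier inversion at i0
    have hS1 : ∑ j, Y j * ψ (-i0 * j) = ∑ i, y i := by
      rw [Finset.sum_eq_single 0]
      · simp [hYdef]
      · intro j _ hj; rw [hzero j hj, zero_mul]
      · intro h; exact absurd (Finset.mem_univ 0) h
    have hS2 : ∑ j, Y j * ψ (-i0 * j) = ((p : ℕ) : F) * y i0 := by
      calc ∑ j, Y j * ψ (-i0 * j)
          = ∑ j, ∑ i, y i * (ψ (i * j) * ψ (-i0 * j)) := by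
            apply Finset.sum_congr rfl; intro j _
            rw [hYdef]; rw [Finset.sum_mul]; apply Finset.sum_congr rfl; intro i _; ring
        _ = ∑ i, ∑ j, y i * ψ ((i - i0) * j) := by
            rw [Finset.sum_comm]
            apply Finset.sum_congr rfl; intro i _
            apply Finset.sum_congr rfl; intro j _
            rw [← AddChar.map_add_eq_mul]
            congr 1
            ring
        _ = ∑ i, y i * (if i - i0 = 0 then ((p : ℕ) : F) else 0) := by
            apply Finset.sum_congr rfl; intro i _
            rw [← Finset.mul_sum, horth]
        _ = ((p : ℕ) : F) * y i0 := by
            rw [Finset.sum_eq_single i0]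
            · simp [mul_comm]
            · intro i _ hi
              rw [if_neg (by simpa [sub_eq_zero] using hi), mul_zero]
            · intro h; exact absurd (Finset.mem_univ i0) h
    rw [← hS1, hS2]
  
  -- (2 : ZMod q) ≠ 0
  have h2q : (2 : ZMod q) ≠ 0 := by
    intro h2
    have : ((2 : ℕ) : ZMod q) = 0 := by push_cast; exact h2
    rw [ZMod.natCast_eq_zero_iff] at this
    have := Nat.le_of_dvd (by norm_num) this
    omega
  -- sum of f over ZMod p is zero
  have hsumf : ∑ t : ZMod p, f t = 0 := by
    have hm1 : (-1 : ZMod q) ≠ 0 := by simp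
    obtain ⟨a, ha0, hfa⟩ := hfsurj (-1) hm1
    have hmul : ∑ t : ZMod p, f t = -1 * ∑ t : ZMod p, f t := by
      rw [Finset.mul_sum]
      apply Fintype.sum_equiv (Equiv.mulLeft₀ a ha0)
      intro t
      have e1 : (Equiv.mulLeft₀ a ha0) t = a * t := rfl
      rw [e1]
      by_cases ht : t = 0
      · simp [ht, hf0]
      · rw [hfmul a t ha0 ht, hfa]; ring
    have h2 : (2 : ZMod q) * ∑ t : ZMod p, f t = 0 := by linear_combination hmul
    rcases mul_eq_zero.mp h2 with h | h
    · exact absurd h h2q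
    · exact h
  -- the all-ones vector lies in the kernel
  have hones : A.mulVec (fun _ => 1) = 0 := by
    funext k
    have : ∑ i : ZMod p, f (k - i) = ∑ t : ZMod p, f t := by
      apply Fintype.sum_equiv (Equiv.subLeft k)
      intro i
      rfl
    simp only [Matrix.mulVec, dotProduct, mul_one, Pi.zero_apply, hAk]
    rw [this, hsumf]
  -- every kernel vector is constant
  have hconst : ∀ x : ZMod p → ZMod q, A.mulVec x = 0 → ∀ i, x i = x 0 := by
    intro x hx i
    have hrow : ∀ k, ∑ i : ZMod p, χ (k - i) * (ι (x i)) = 0 := by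
      intro k
      have hk : ∑ i : ZMod p, A k i * x i = 0 := by
        have := congrFun hx k
        simpa [Matrix.mulVec, dotProduct] using this
      have := congrArg ι hk
      rw [map_sum] at this
      simpa [hχapp, hAk, _root_.map_mul] using this
    have h1 := key (fun i => ι (x i)) hrow i
    have h2 := key (fun i => ι (x i)) hrow 0
    have h3 : ((p : ℕ) : F) * ι (x i) = ((p : ℕ) : F) * ι (x 0) := by rw [h1, h2]
    exact hιinj (mul_left_cancel₀ hpF h3)
  -- kernel is the span of the ones vector
  have hker : LinearMap.ker A.mulVecLin
      = Submodule.span (ZMod q) {(fun _ => 1 : ZMod p → ZMod q)} := by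
    apply le_antisymm
    · intro x hx
      rw [LinearMap.mem_ker, Matrix.mulVecLin_apply] at hx
      rw [Submodule.mem_span_singleton]
      exact ⟨x 0, funext fun i => by
        simp only [Pi.smul_apply, smul_eq_mul, mul_one]
        exact (hconst x hx i).symm⟩
    · rw [Submodule.span_le, Set.singleton_subset_iff]
      exact LinearMap.mem_ker.mpr (by rw [Matrix.mulVecLin_apply]; exact hones)
  have hnull : finrank (ZMod q) (LinearMap.ker A.mulVecLin) = 1 := by
    rw [hker]
    apply finrank_span_singleton
    intro h
    exact one_ne_zero (congrFun h 0)
  have hrn := LinearMap.finrank_range_add_finrank_ker A.mulVecLin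
  have hpi : finrank (ZMod q) (ZMod p → ZMod q) = p := by
    rw [Module.finrank_pi, ZMod.card]
  have hrk : A.rank = finrank (ZMod q) (LinearMap.range A.mulVecLin) := rfl
  rw [hnull, hpi] at hrn
  omega
end

section
/- Let m, n ≥ 2 be integers. Let σ be the permutation of ℤ_m × ℤ_n given by σ(x, y) = (π(x), π_x(y)), where π ∈ S(ℤ_m) and π_x ∈ S(ℤ_n) for each x ∈ ℤ_m. Suppose i ∈ ℤ_m, t is an integer, and b ≥ 1 is such that the permutation y ↦ π_i(y + t) of ℤ_n has at least b cycles (counting fixed points). Then there exists an integer k such that σ ∘ c^k has at least b + 1 cycles (counting fixed points). -/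
/-- `cyc σ` is the number of cycles in the cycle decomposition of the permutation `σ`,
counting fixed points as cycles; i.e., the number of orbits of `σ`. -/
noncomputable def cyc {α : Type*} (σ : Equiv.Perm α) : ℕ :=
  Nat.card (Quotient (Setoid.mk σ.SameCycle
    ⟨fun x => Equiv.Perm.SameCycle.refl σ x, fun h => h.symm, fun h h' => h.trans h'⟩))

private theorem semiconj_zpow' {α β : Type*} (f : Equiv.Perm α) (g : Equiv.Perm β) (ψ : α → β)
    (h : ∀ a, ψ (f a) = g (ψ a)) : ∀ (z : ℤ) (a : α), ψ ((f ^ z) a) = (g ^ z) (ψ a) := by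
  have hinv : ∀ a, ψ (f⁻¹ a) = g⁻¹ (ψ a) := by
    intro a
    have := h (f⁻¹ a)
    rw [show f (f⁻¹ a) = a from f.apply_symm_apply a] at this
    rw [this, show g⁻¹ (g (ψ (f⁻¹ a))) = ψ (f⁻¹ a) from g.symm_apply_apply _]
  intro z
  induction z using Int.induction_on with
  | zero => simp
  | succ z ih =>
    intro a
    have h1 : f ^ ((z : ℤ) + 1) = f ^ (z : ℤ) * f := zpow_add_one f z
    have h2 : g ^ ((z : ℤ) + 1) = g ^ (z : ℤ) * g := zpow_add_one g z
    rw [h1, h2, Equiv.Perm.mul_apply, Equiv.Perm.mul_apply, ih (f a), h]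
  | pred z ih =>
    intro a
    have h1 : f ^ (-(z : ℤ) - 1) = f ^ (-(z : ℤ)) * f⁻¹ := zpow_sub_one f (-z)
    have h2 : g ^ (-(z : ℤ) - 1) = g ^ (-(z : ℤ)) * g⁻¹ := zpow_sub_one g (-z)
    rw [h1, h2, Equiv.Perm.mul_apply, Equiv.Perm.mul_apply, ih (f⁻¹ a), hinv]

private theorem cpow_formula (m n : ℕ) (hm : 2 ≤ m) [NeZero m] [NeZero n]
    (c : Equiv.Perm (ZMod m × ZMod n))
    (hc : ∀ (x : ZMod m) (y : ZMod n),
      c (x, y) = if x = (m : ZMod m) - 1 then (x + 1, y + 1) else (x + 1, y)) :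
    ∀ (a : ℕ) (x : ZMod m) (y : ZMod n),
      (c ^ a) (x, y) = (x + (a : ZMod m), y + (((x.val + a) / m : ℕ) : ZMod n)) := by
  intro a
  induction a with
  | zero =>
    intro x y
    simp [Nat.div_eq_of_lt (ZMod.val_lt x)]
  | succ a ih =>
    intro x y
    have hstep : (c ^ (a + 1)) (x, y) = c ((c ^ a) (x, y)) := by
      rw [pow_succ']; rfl
    rw [hstep, ih, hc]
    have hx : x = ((x.val : ℕ) : ZMod m) := (ZMod.natCast_rightInverse x).symm
    set v := x.val with hv
    have hvm : v < m := ZMod.val_lt x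
    have hcond : (x + (a : ZMod m) = (m : ZMod m) - 1) ↔ ((v + a) % m = m - 1) := by
      have h1 : x + (a : ZMod m) = ((v + a : ℕ) : ZMod m) := by rw [hx]; push_cast; ring
      have h2 : (m : ZMod m) - 1 = ((m - 1 : ℕ) : ZMod m) := by
        have : ((m - 1 : ℕ) : ZMod m) = (m : ZMod m) - 1 := by
          push_cast [Nat.cast_sub (by omega : 1 ≤ m)]; ring
        rw [this]
      rw [h1, h2, ZMod.natCast_eq_natCast_iff, Nat.ModEq]
      rw [Nat.mod_eq_of_lt (by omega : m - 1 < m)]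
    by_cases h : (v + a) % m = m - 1
    · rw [if_pos (hcond.mpr h)]
      have hq := Nat.div_add_mod (v + a) m
      set q := (v + a) / m with hq'
      have hdiv : (v + a + 1) / m = q + 1 := by
        have h1 : v + a + 1 = m * (q + 1) := by rw [Nat.mul_succ]; omega
        rw [h1, Nat.mul_div_cancel_left _ (by omega : 0 < m)]
      rw [← Nat.add_assoc, hdiv]
      simp only [Prod.mk.injEq]
      constructor
      · push_cast; try ring
      · push_cast; try ring
    · rw [if_neg (fun hh => h (hcond.mp hh))]
      have hq := Nat.div_add_mod (v + a) m
      have hr : (v + a) % m < m - 1 := by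
        have := Nat.mod_lt (v + a) (by omega : 0 < m); omega
      set q := (v + a) / m with hq'
      have hdiv : (v + a + 1) / m = q := by
        have h1 : v + a + 1 = (v + a) % m + 1 + m * q := by omega
        rw [h1, Nat.add_mul_div_left _ _ (by omega : 0 < m),
          Nat.div_eq_of_lt (by omega : (v + a) % m + 1 < m)]
        omega
      rw [← Nat.add_assoc, hdiv]
      simp only [Prod.mk.injEq]
      constructor
      · push_cast; try ring
      · push_cast; try ring

theorem wreath_shift_many_cycles (m n : ℕ) (hm : 2 ≤ m) (hn : 2 ≤ n)
    (σ c : Equiv.Perm (ZMod m × ZMod n))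
    (π : Equiv.Perm (ZMod m)) (ρ : ZMod m → Equiv.Perm (ZMod n))
    (hσ : ∀ (x : ZMod m) (y : ZMod n), σ (x, y) = (π x, ρ x y))
    (hc : ∀ (x : ZMod m) (y : ZMod n),
      c (x, y) = if x = (m : ZMod m) - 1 then (x + 1, y + 1) else (x + 1, y))
    (i : ZMod m) (t : ℤ) (b : ℕ) (hb : 1 ≤ b)
    (hcyc : b ≤ cyc (ρ i * Equiv.addRight (t : ZMod n))) :
    ∃ k : ℤ, b + 1 ≤ cyc (σ * c ^ k) := by
  haveI : NeZero m := ⟨by omega⟩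
  haveI : NeZero n := ⟨by omega⟩
  haveI : Fact (1 < m) := ⟨by omega⟩
  have hcpow := cpow_formula m n hm c hc
  set k₀ : ℕ := (i - π i).val with hk₀def
  have hk₀ : ((k₀ : ℕ) : ZMod m) = i - π i := ZMod.natCast_rightInverse _
  set N₀ : ℕ := ((π i).val + k₀) / m with hN₀def
  set j : ℤ := t - (N₀ : ℤ) with hjdef
  refine ⟨(k₀ : ℤ) + (m : ℤ) * j, ?_⟩
  set k : ℤ := (k₀ : ℤ) + (m : ℤ) * j with hkdef
  -- the action of D^z where D = c^m
  have hDz : ∀ (z : ℤ) (x : ZMod m) (y : ZMod n),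
      ((c ^ (m : ℕ)) ^ z) (x, y) = (x, y + (z : ZMod n)) := by
    intro z x y
    have hsemi : ∀ a : ZMod n, (fun y => ((x, y) : ZMod m × ZMod n))
        ((Equiv.addRight (1 : ZMod n)) a) = (c ^ (m : ℕ)) ((fun y => (x, y)) a) := by
      intro a
      rw [hcpow m x a]
      have h1 : (x.val + m) / m = 1 := by
        rw [Nat.add_div_right _ (by omega : 0 < m), Nat.div_eq_of_lt (ZMod.val_lt x)]
      simp [h1]
    have := (semiconj_zpow' (Equiv.addRight (1 : ZMod n)) (c ^ (m : ℕ))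
      (fun y => (x, y)) hsemi z y).symm
    rw [this, Equiv.zsmul_addRight]
    simp
  -- the action of c^k
  have hck : ∀ (x : ZMod m) (y : ZMod n),
      (c ^ k) (x, y) = (x + (k₀ : ZMod m),
        y + (((x.val + k₀) / m : ℕ) : ZMod n) + (j : ZMod n)) := by
    intro x y
    have hsplit : c ^ k = c ^ (k₀ : ℕ) * (c ^ (m : ℕ)) ^ j := by
      rw [hkdef, zpow_add, ← zpow_natCast c (k₀ : ℕ), ← zpow_natCast c (m : ℕ), ← zpow_mul]
    rw [hsplit, Equiv.Perm.mul_apply, hDz j x y, hcpow k₀ x (y + (j : ZMod n))]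
    refine Prod.ext rfl ?_
    show y + (j : ZMod n) + _ = _
    ring
  -- the fiber over π i is invariant with induced permutation τ₀
  set τ₀ : Equiv.Perm (ZMod n) := ρ i * Equiv.addRight ((t : ℤ) : ZMod n) with hτ₀def
  have hfiber : ∀ y : ZMod n, (σ * c ^ k) (π i, y) = (π i, τ₀ y) := by
    intro y
    rw [Equiv.Perm.mul_apply, hck (π i) y]
    have h1 : π i + (k₀ : ZMod m) = i := by rw [hk₀]; ring
    rw [h1, hσ]
    have h2 : y + ((N₀ : ℕ) : ZMod n) + (j : ZMod n) = y + ((t : ℤ) : ZMod n) := by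
      rw [hjdef]
      push_cast
      ring
    rw [h2]
    rfl
  -- now count orbits
  have hfiberz : ∀ (z : ℤ) (y : ZMod n),
      ((σ * c ^ k) ^ z) (π i, y) = (π i, (τ₀ ^ z) y) := by
    intro z y
    exact (semiconj_zpow' τ₀ (σ * c ^ k) (fun y => (π i, y)) (fun a => (hfiber a).symm) z y).symm
  show b + 1 ≤ cyc (σ * c ^ k)
  unfold cyc at hcyc ⊢
  set F := σ * c ^ k
  set s0 : Setoid (ZMod n) := Setoid.mk τ₀.SameCycle
    ⟨fun x => Equiv.Perm.SameCycle.refl τ₀ x, fun h => h.symm, fun h h' => h.trans h'⟩ with hs0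
  set sF : Setoid (ZMod m × ZMod n) := Setoid.mk F.SameCycle
    ⟨fun x => Equiv.Perm.SameCycle.refl F x, fun h => h.symm, fun h h' => h.trans h'⟩ with hsF
  haveI : Finite (Quotient sF) := Quotient.finite _
  haveI : Finite (Quotient s0) := Quotient.finite _
  -- the injection
  have hresp : ∀ y y' : ZMod n, s0.r y y' → sF.r (π i, y) (π i, y') := by
    intro y y' hyy'
    obtain ⟨z, hz⟩ := hyy'
    exact ⟨z, by rw [hfiberz z y, hz]⟩
  set g : Quotient s0 ⊕ Unit → Quotient sF := fun q =>
    match q with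
    | Sum.inl q => Quotient.map' (fun y => ((π i : ZMod m), y)) hresp q
    | Sum.inr _ => Quotient.mk'' ((π i + 1 : ZMod m), (0 : ZMod n)) with hg
  have hginj : Function.Injective g := by
    have key : ∀ (y : ZMod n) (p : ZMod m × ZMod n), sF.r (π i, y) p → p.1 = π i ∧ s0.r y p.2 := by
      intro y p hrel
      obtain ⟨z, hz⟩ := hrel
      rw [hfiberz z y] at hz
      exact ⟨by rw [← hz], ⟨z, by rw [← hz]⟩⟩
    intro q q' hqq'
    match q, q' with
    | Sum.inl q, Sum.inl q' =>
      induction q using Quotient.inductionOn' with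
      | h y =>
      induction q' using Quotient.inductionOn' with
      | h y' =>
      simp only [hg, Quotient.map'_mk''] at hqq'
      have hrel : sF.r (π i, y) (π i, y') := Quotient.exact' hqq'
      exact congrArg Sum.inl (Quotient.sound' (key y _ hrel).2)
    | Sum.inl q, Sum.inr u =>
      exfalso
      induction q using Quotient.inductionOn' with
      | h y =>
      simp only [hg, Quotient.map'_mk''] at hqq'
      have hrel : sF.r (π i, y) (π i + 1, 0) := Quotient.exact' hqq'
      have := (key y _ hrel).1
      simp at this
    | Sum.inr u, Sum.inl q =>
      exfalso
      induction q using Quotient.inductionOn' with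
      | h y =>
      simp only [hg, Quotient.map'_mk''] at hqq'
      have hrel : sF.r (π i, y) (π i + 1, 0) := Setoid.symm' _ (Quotient.exact' hqq')
      have := (key y _ hrel).1
      simp at this
    | Sum.inr u, Sum.inr u' => rfl
  have hcard := Nat.card_le_card_of_injective g hginj
  rw [Nat.card_sum] at hcard
  simp only [Nat.card_unique] at hcard
  omega
end

section
/- Let n, m ≥ 2 be coprime integers. Then c_poly(nm) ≥ c_poly(n) · c_poly(m). -/
/-- `c_poly(n)`: the minimum, over all permutations `π` of `ℤ_n` that are induced by a
polynomial with coefficients in `ℤ_n`, of the maximum over `k ∈ ℤ_n` of the number of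
cycles of the cyclic shift `x ↦ π (x + k)`. -/
noncomputable def cPoly (n : ℕ) : ℕ :=
  sInf { m : ℕ | ∃ π : Equiv.Perm (ZMod n),
    (∃ f : Polynomial (ZMod n), ∀ a : ZMod n, π a = f.eval a) ∧
    m = sSup { m' : ℕ | ∃ k : ZMod n, m' = cyc (π * Equiv.addRight k) } }

open Equiv Equiv.Perm

/-- conjugation by an equiv, as a monoid hom on permutation groups -/
def permCongrHom {α β : Type*} (e : α ≃ β) : Perm α →* Perm β where
  toFun := e.permCongr
  map_one' := by ext x; simp
  map_mul' σ τ := by ext x; simp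

/-- `prodCongr` as a monoid hom -/
def prodCongrHom (α β : Type*) : Perm α × Perm β →* Perm (α × β) where
  toFun p := Equiv.prodCongr p.1 p.2
  map_one' := by ext x <;> rfl
  map_mul' p q := by ext x <;> rfl

lemma sameCycle_permCongr {α β : Type*} (e : α ≃ β) (σ : Perm α) (x y : α) :
    (e.permCongr σ).SameCycle (e x) (e y) ↔ σ.SameCycle x y := by
  constructor
  · rintro ⟨i, hi⟩
    refine ⟨i, ?_⟩
    have : (e.permCongr σ) ^ i = e.permCongr (σ ^ i) := (map_zpow (_root_.permCongrHom e) σ i).symm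
    rw [this] at hi
    simpa using hi
  · rintro ⟨i, hi⟩
    refine ⟨i, ?_⟩
    have : (e.permCongr σ) ^ i = e.permCongr (σ ^ i) := (map_zpow (_root_.permCongrHom e) σ i).symm
    rw [this]
    simp [hi]

lemma cyc_permCongr {α β : Type*} (e : α ≃ β) (σ : Perm α) :
    cyc (e.permCongr σ) = cyc σ := by
  unfold cyc
  exact (Nat.card_congr (Quotient.congr e (fun a b =>
    (sameCycle_permCongr e σ a b).symm))).symm

lemma zpow_prodCongr {α β : Type*} (σ : Perm α) (τ : Perm β) (i : ℤ) :
    (Equiv.prodCongr σ τ) ^ i = Equiv.prodCongr (σ ^ i) (τ ^ i) := by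
  have := map_zpow (prodCongrHom α β) (σ, τ) i
  simpa [prodCongrHom, Prod.pow_def] using this.symm

lemma cyc_prodCongr_ge {α β : Type*} [Finite α] [Finite β] (σ : Perm α) (τ : Perm β) :
    cyc σ * cyc τ ≤ cyc (Equiv.prodCongr σ τ) := by
  unfold cyc
  set sσ : Setoid α := Setoid.mk σ.SameCycle
    ⟨fun x => Equiv.Perm.SameCycle.refl σ x, fun h => h.symm, fun h h' => h.trans h'⟩ with hsσ
  set sτ : Setoid β := Setoid.mk τ.SameCycle
    ⟨fun x => Equiv.Perm.SameCycle.refl τ x, fun h => h.symm, fun h h' => h.trans h'⟩ with hsτ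
  set sp : Setoid (α × β) := Setoid.mk (Equiv.Perm.SameCycle (Equiv.prodCongr σ τ))
    ⟨fun x => Equiv.Perm.SameCycle.refl _ x, fun h => h.symm, fun h h' => h.trans h'⟩ with hsp
  have hlift : ∀ a b : α × β, sp.r a b →
      ((Quotient.mk sσ a.1, Quotient.mk sτ a.2) : Quotient sσ × Quotient sτ)
        = (Quotient.mk sσ b.1, Quotient.mk sτ b.2) := by
    rintro a b ⟨i, hi⟩
    rw [zpow_prodCongr] at hi
    have h1 : (σ ^ i) a.1 = b.1 := congrArg Prod.fst hi
    have h2 : (τ ^ i) a.2 = b.2 := congrArg Prod.snd hi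
    exact Prod.ext (Quotient.sound ⟨i, h1⟩) (Quotient.sound ⟨i, h2⟩)
  let F : Quotient sp → Quotient sσ × Quotient sτ :=
    Quotient.lift (fun p : α × β => (Quotient.mk sσ p.1, Quotient.mk sτ p.2)) hlift
  have hF : Function.Surjective F := by
    rintro ⟨qa, qb⟩
    refine Quotient.inductionOn₂ qa qb (fun a b => ⟨Quotient.mk sp (a, b), rfl⟩)
  calc cyc σ * cyc τ = Nat.card (Quotient sσ × Quotient sτ) := by
        rw [Nat.card_prod]; rfl
    _ ≤ Nat.card (Quotient sp) := Nat.card_le_card_of_surjective F hF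

lemma key (n m : ℕ) (hn : 2 ≤ n) (hm : 2 ≤ m) (hco : Nat.Coprime n m)
    (π : Perm (ZMod (n * m))) (f : Polynomial (ZMod (n * m)))
    (hf : ∀ a : ZMod (n * m), π a = f.eval a) :
    cPoly n * cPoly m ≤
      sSup { m' : ℕ | ∃ k : ZMod (n * m), m' = cyc (π * Equiv.addRight k) } := by
  haveI : NeZero n := ⟨by omega⟩
  haveI : NeZero m := ⟨by omega⟩
  haveI : NeZero (n * m) := ⟨by positivity⟩
  set e : ZMod (n * m) ≃+* ZMod n × ZMod m := ZMod.chineseRemainder hco with he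
  set r₁ : ZMod (n * m) →+* ZMod n := (RingHom.fst _ _).comp e.toRingHom with hr₁
  set r₂ : ZMod (n * m) →+* ZMod m := (RingHom.snd _ _).comp e.toRingHom with hr₂
  have hr₁s : Function.Surjective r₁ := Prod.fst_surjective.comp e.surjective
  have hr₂s : Function.Surjective r₂ := Prod.snd_surjective.comp e.surjective
  set g : Polynomial (ZMod n) := f.map r₁ with hg
  set h : Polynomial (ZMod m) := f.map r₂ with hh
  have hG : ∀ x, g.eval (r₁ x) = r₁ (π x) := by
    intro x; rw [hf, hg, Polynomial.eval_map, Polynomial.eval₂_at_apply]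
  have hH : ∀ x, h.eval (r₂ x) = r₂ (π x) := by
    intro x; rw [hf, hh, Polynomial.eval_map, Polynomial.eval₂_at_apply]
  have hGs : Function.Surjective (fun x => g.eval x : ZMod n → ZMod n) := by
    intro y
    obtain ⟨x, hx⟩ := hr₁s y
    obtain ⟨w, hw⟩ := π.surjective x
    exact ⟨r₁ w, by simp [hG w, hw, hx]⟩
  have hHs : Function.Surjective (fun x => h.eval x : ZMod m → ZMod m) := by
    intro y
    obtain ⟨x, hx⟩ := hr₂s y
    obtain ⟨w, hw⟩ := π.surjective x
    exact ⟨r₂ w, by simp [hH w, hw, hx]⟩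
  set σ : Perm (ZMod n) :=
    Equiv.ofBijective _ ((Finite.surjective_iff_bijective).mp hGs) with hσ
  set τ : Perm (ZMod m) :=
    Equiv.ofBijective _ ((Finite.surjective_iff_bijective).mp hHs) with hτ
  -- the cycle-count sets for σ and τ
  set Sn : Set ℕ := { m' | ∃ k : ZMod n, m' = cyc (σ * Equiv.addRight k) } with hSn
  set Sm : Set ℕ := { m' | ∃ k : ZMod m, m' = cyc (τ * Equiv.addRight k) } with hSm
  have hSnr : Sn = Set.range (fun k : ZMod n => cyc (σ * Equiv.addRight k)) := by
    ext t; simp [hSn, eq_comm, Set.mem_setOf_eq]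
  have hSmr : Sm = Set.range (fun k : ZMod m => cyc (τ * Equiv.addRight k)) := by
    ext t; simp [hSm, eq_comm, Set.mem_setOf_eq]
  have hSnb : BddAbove Sn := hSnr ▸ (Set.finite_range _).bddAbove
  have hSmb : BddAbove Sm := hSmr ▸ (Set.finite_range _).bddAbove
  have hSnne : Sn.Nonempty := ⟨_, ⟨(0 : ZMod n), rfl⟩⟩
  have hSmne : Sm.Nonempty := ⟨_, ⟨(0 : ZMod m), rfl⟩⟩
  obtain ⟨k₁, hk₁⟩ : ∃ k : ZMod n, sSup Sn = cyc (σ * Equiv.addRight k) :=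
    Nat.sSup_mem hSnne hSnb
  obtain ⟨k₂, hk₂⟩ : ∃ k : ZMod m, sSup Sm = cyc (τ * Equiv.addRight k) :=
    Nat.sSup_mem hSmne hSmb
  have hcn : cPoly n ≤ sSup Sn :=
    Nat.sInf_le ⟨σ, ⟨g, fun a => rfl⟩, rfl⟩
  have hcm : cPoly m ≤ sSup Sm :=
    Nat.sInf_le ⟨τ, ⟨h, fun a => rfl⟩, rfl⟩
  set k : ZMod (n * m) := e.symm (k₁, k₂) with hk
  have hek : e k = (k₁, k₂) := e.apply_symm_apply _
  have hconj : e.toEquiv.permCongr (π * Equiv.addRight k)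
      = Equiv.prodCongr (σ * Equiv.addRight k₁) (τ * Equiv.addRight k₂) := by
    ext x
    · show r₁ ((π * Equiv.addRight k) (e.symm x)) = σ ((Equiv.addRight k₁) x.1)
      have : (π * Equiv.addRight k) (e.symm x) = π (e.symm x + k) := rfl
      rw [this, ← hG, map_add]
      have h1 : r₁ (e.symm x) = x.1 := by
        show (e (e.symm x)).1 = x.1
        rw [e.apply_symm_apply]
      have h2 : r₁ k = k₁ := by
        show (e k).1 = k₁
        rw [hek]
      rw [h1, h2]; rfl
    · show r₂ ((π * Equiv.addRight k) (e.symm x)) = τ ((Equiv.addRight k₂) x.2)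
      have : (π * Equiv.addRight k) (e.symm x) = π (e.symm x + k) := rfl
      rw [this, ← hH, map_add]
      have h1 : r₂ (e.symm x) = x.2 := by
        show (e (e.symm x)).2 = x.2
        rw [e.apply_symm_apply]
      have h2 : r₂ k = k₂ := by
        show (e k).2 = k₂
        rw [hek]
      rw [h1, h2]; rfl
  have hmain : cPoly n * cPoly m ≤ cyc (π * Equiv.addRight k) := by
    calc cPoly n * cPoly m ≤ sSup Sn * sSup Sm := Nat.mul_le_mul hcn hcm
      _ = cyc (σ * Equiv.addRight k₁) * cyc (τ * Equiv.addRight k₂) := by rw [hk₁, hk₂]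
      _ ≤ cyc (Equiv.prodCongr (σ * Equiv.addRight k₁) (τ * Equiv.addRight k₂)) :=
          cyc_prodCongr_ge _ _
      _ = cyc (e.toEquiv.permCongr (π * Equiv.addRight k)) := by rw [hconj]
      _ = cyc (π * Equiv.addRight k) := cyc_permCongr _ _
  refine hmain.trans (le_csSup ?_ ⟨k, rfl⟩)
  have : { m' : ℕ | ∃ k : ZMod (n * m), m' = cyc (π * Equiv.addRight k) }
      = Set.range (fun k : ZMod (n * m) => cyc (π * Equiv.addRight k)) := by
    ext t; simp [eq_comm, Set.mem_setOf_eq]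
  rw [this]
  exact (Set.finite_range _).bddAbove

theorem cPoly_mul_ge_of_coprime (n m : ℕ) (hn : 2 ≤ n) (hm : 2 ≤ m)
    (hco : Nat.Coprime n m) :
    cPoly n * cPoly m ≤ cPoly (n * m) := by
  have hne : { t : ℕ | ∃ π : Equiv.Perm (ZMod (n * m)),
      (∃ f : Polynomial (ZMod (n * m)), ∀ a : ZMod (n * m), π a = f.eval a) ∧
      t = sSup { m' : ℕ | ∃ k : ZMod (n * m), m' = cyc (π * Equiv.addRight k) } }.Nonempty :=
    ⟨_, 1, ⟨Polynomial.X, fun a => by simp⟩, rfl⟩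
  obtain ⟨π, ⟨f, hf⟩, hval⟩ := Nat.sInf_mem hne
  exact le_of_le_of_eq (key n m hn hm hco π f hf) hval.symm
end
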